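/- If gcd(k, l) = 1 and r divides l, then for each residue class i modulo r, the sum Σ_{m ≡ i mod r} p(k, l-1, m) of restricted partition numbers equals (1/r)·C(k+l-1, l-1). -/
import Mathlib

open Finset

def restrictedPartitions (M N n : ℕ) : ℕ :=
  ((Finset.univ : Finset (Fin N → Fin (M + 1))).filter
    (fun f => (∀ i j : Fin N, i ≤ j → (f j : ℕ) ≤ (f i : ℕ)) ∧
      ∑ i, (f i : ℕ) = n)).card


def comps (k L : ℕ) : Finset (Fin L → Fin (k+1)) :=
  univ.filter (fun b => ∑ j, ((b j : ℕ)) = k)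

def compEquiv (k L : ℕ) : {b : Fin L → Fin (k+1) // ∑ j, (b j : ℕ) = k} ≃ Sym (Fin L) k where
  toFun b := ⟨∑ j, ((b.1 j : ℕ) • ({j} : Multiset (Fin L))), by
    simp [map_sum, b.2]⟩
  invFun m := ⟨fun j => ⟨Multiset.count j m.1, by
      have h1 := Multiset.count_le_card j m.1
      have h2 := m.2
      omega⟩, by
    simp only [Fin.val_mk]
    exact (Multiset.sum_count_eq_card fun a _ => mem_univ a).trans m.2⟩
  left_inv b := by
    ext j
    simp [Multiset.count_sum', Multiset.count_singleton]
  right_inv m := by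
    ext1
    show (∑ x : Fin L, Multiset.count x ↑m • ({x} : Multiset (Fin L))) = ↑m
    conv_rhs => rw [← Multiset.toFinset_sum_count_nsmul_eq (m : Multiset (Fin L))]
    refine (Finset.sum_subset (subset_univ _) ?_).symm
    intro x _ hx
    rw [Multiset.mem_toFinset] at hx
    simp [Multiset.count_eq_zero_of_notMem hx]

lemma card_comps (k L : ℕ) : (comps k L).card = (L + k - 1).choose k := by
  rw [comps, ← Fintype.card_subtype, Fintype.card_congr (compEquiv k L),
    Sym.card_sym_eq_choose, Fintype.card_fin]



lemma step_anti (F : ℕ → ℕ) (h : ∀ t, F (t+1) ≤ F t) : ∀ a b, a ≤ b → F b ≤ F a := by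
  intro a b hab
  induction b, hab using Nat.le_induction with
  | base => exact le_refl _
  | succ b hab ih => exact le_trans (h b) ih

def padF {k n : ℕ} (f : Fin n → Fin (k+1)) : ℕ → ℕ :=
  fun t => if t = 0 then k else if h : t - 1 < n then (f ⟨t - 1, h⟩ : ℕ) else 0

lemma padF_le {k n : ℕ} (f : Fin n → Fin (k+1)) (t : ℕ) : padF f t ≤ k := by
  unfold padF
  split
  · exact le_refl k
  · split
    · exact Nat.lt_succ_iff.mp (Fin.is_lt _)
    · exact Nat.zero_le k

lemma padF_succ {k n : ℕ} (f : Fin n → Fin (k+1)) (t : ℕ) (ht : t < n) :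
    padF f (t+1) = (f ⟨t, ht⟩ : ℕ) := by
  unfold padF
  rw [if_neg (by omega)]
  simp only [Nat.add_sub_cancel]
  rw [dif_pos ht]

lemma padF_top {k n : ℕ} (f : Fin n → Fin (k+1)) (t : ℕ) (ht : n < t) : padF f t = 0 := by
  unfold padF
  rw [if_neg (by omega), dif_neg (by omega)]

lemma padF_step {k n : ℕ} (f : Fin n → Fin (k+1))
    (hf : ∀ i j : Fin n, i ≤ j → (f j : ℕ) ≤ (f i : ℕ)) (t : ℕ) :
    padF f (t+1) ≤ padF f t := by
  match t with
  | 0 =>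
    calc padF f 1 ≤ k := padF_le f 1
      _ = padF f 0 := rfl
  | (s+1) =>
    unfold padF
    rw [if_neg (by omega), if_neg (by omega)]
    by_cases h1 : s + 1 < n
    · rw [dif_pos (show s+1+1-1 < n by omega), dif_pos (show s+1-1 < n by omega)]
      exact hf ⟨s, by omega⟩ ⟨s+1, by omega⟩ (by exact Fin.mk_le_mk.mpr (by omega))
    · rw [dif_neg (by omega)]
      exact Nat.zero_le _

def tailSum {k n : ℕ} (b : Fin (n+1) → Fin (k+1)) (t : ℕ) : ℕ :=
  ∑ j ∈ univ.filter (fun j : Fin (n+1) => t ≤ (j : ℕ)), (b j : ℕ)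

lemma tailSum_zero {k n : ℕ} (b : Fin (n+1) → Fin (k+1)) : tailSum b 0 = ∑ j, (b j : ℕ) := by
  unfold tailSum
  rw [filter_true_of_mem (fun x _ => Nat.zero_le _)]

lemma tailSum_top {k n : ℕ} (b : Fin (n+1) → Fin (k+1)) (t : ℕ) (ht : n+1 ≤ t) :
    tailSum b t = 0 := by
  unfold tailSum
  rw [filter_false_of_mem, sum_empty]
  intro j _
  have := j.is_lt
  omega

lemma tailSum_succ {k n : ℕ} (b : Fin (n+1) → Fin (k+1)) (t : ℕ) (ht : t < n+1) :
    tailSum b t = (b ⟨t, ht⟩ : ℕ) + tailSum b (t+1) := by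
  unfold tailSum
  have hset : univ.filter (fun j : Fin (n+1) => t ≤ (j:ℕ))
      = insert ⟨t, ht⟩ (univ.filter (fun j : Fin (n+1) => t+1 ≤ (j:ℕ))) := by
    ext j
    simp [Fin.ext_iff]
    omega
  rw [hset, sum_insert (by simp)]

lemma tailSum_step {k n : ℕ} (b : Fin (n+1) → Fin (k+1)) (t : ℕ) :
    tailSum b (t+1) ≤ tailSum b t := by
  apply sum_le_sum_of_subset
  intro j
  simp only [mem_filter, mem_univ, true_and]
  omega

def Phi {k n : ℕ} (f : Fin n → Fin (k+1)) : Fin (n+1) → Fin (k+1) :=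
  fun j => ⟨padF f ↑j - padF f (↑j+1), by have := padF_le f ↑j; omega⟩

def Psi {k n : ℕ} (b : Fin (n+1) → Fin (k+1)) (hb : ∑ j, (b j : ℕ) = k) : Fin n → Fin (k+1) :=
  fun i => ⟨tailSum b ((i:ℕ)+1), by
    have h1 : tailSum b ((i:ℕ)+1) ≤ tailSum b 0 :=
      step_anti _ (fun t => tailSum_step b t) 0 _ (Nat.zero_le _)
    rw [tailSum_zero, hb] at h1
    omega⟩

/-- if `b j = F j - F (j+1)` pointwise for antitone `F` vanishing at `n+1`,
then tail sums of `b` are given by `F`. -/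
lemma tail_eq {k n : ℕ} (b : Fin (n+1) → Fin (k+1)) (F : ℕ → ℕ)
    (hb : ∀ j : Fin (n+1), (b j : ℕ) = F ↑j - F (↑j+1))
    (hstep : ∀ t, F (t+1) ≤ F t) (htop : F (n+1) = 0) :
    ∀ t, t ≤ n+1 → tailSum b t = F t := by
  have key : ∀ d, tailSum b (n+1-d) = F (n+1-d) := by
    intro d
    induction d with
    | zero => simp [tailSum_top b (n+1) (le_refl _), htop]
    | succ d ih =>
      by_cases hd : d ≥ n+1
      · have : n+1-(d+1) = n+1-d := by omega
        rw [this]; exact ih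
      · have ht : n+1-(d+1) < n+1 := by omega
        have ht2 : n+1-(d+1)+1 = n+1-d := by omega
        rw [tailSum_succ b _ ht]
        have hbv : (b ⟨n+1-(d+1), ht⟩ : ℕ) = F (n+1-(d+1)) - F (n+1-(d+1)+1) := hb _
        rw [hbv, ht2, ih]
        have h3 := step_anti F hstep (n+1-(d+1)) (n+1-d) (by omega)
        omega
  intro t ht
  have := key (n+1-t)
  rwa [show n+1-(n+1-t) = t by omega] at this

lemma card_fin_lt (n c : ℕ) (hc : c ≤ n) :
    (univ.filter (fun i : Fin n => (i:ℕ) < c)).card = c := by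
  have h : ∀ m ∈ range c, m < n := fun m hm => lt_of_lt_of_le (mem_range.mp hm) hc
  have hset : univ.filter (fun i : Fin n => (i:ℕ) < c) = (range c).attachFin h := by
    ext i
    simp [Finset.mem_attachFin, mem_range]
  rw [hset, Finset.card_attachFin, card_range]

lemma sum_tailSum {k n : ℕ} (b : Fin (n+1) → Fin (k+1)) :
    ∑ i : Fin n, tailSum b ((i:ℕ)+1) = ∑ j : Fin (n+1), (j:ℕ) * (b j : ℕ) := by
  unfold tailSum
  calc ∑ i : Fin n, ∑ j ∈ univ.filter (fun j : Fin (n+1) => (i:ℕ)+1 ≤ (j:ℕ)), (b j : ℕ)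
      = ∑ i : Fin n, ∑ j : Fin (n+1), if (i:ℕ) < (j:ℕ) then (b j : ℕ) else 0 := by
        refine sum_congr rfl (fun i _ => ?_)
        rw [sum_filter]
        exact sum_congr rfl (fun j _ => if_congr (by omega) rfl rfl)
    _ = ∑ j : Fin (n+1), ∑ i : Fin n, if (i:ℕ) < (j:ℕ) then (b j : ℕ) else 0 := sum_comm
    _ = ∑ j : Fin (n+1), (j:ℕ) * (b j : ℕ) := by
        refine sum_congr rfl (fun j _ => ?_)
        rw [← sum_filter, sum_const, smul_eq_mul, card_fin_lt n (j:ℕ) (by omega)]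

lemma tele_int (G : ℕ → ℤ) (N : ℕ) :
    ∑ j ∈ range N, (j:ℤ) * (G j - G (j+1)) = (∑ j ∈ range N, G (j+1)) - N * G N := by
  induction N with
  | zero => simp
  | succ N ih =>
    rw [sum_range_succ, ih, sum_range_succ]
    push_cast
    ring

lemma restrictedPartitions_eq (k n m : ℕ) :
    restrictedPartitions k n m =
      ((univ.filter (fun b : Fin (n+1) → Fin (k+1) =>
        (∑ j, (b j : ℕ)) = k ∧ ∑ j : Fin (n+1), (j:ℕ) * (b j : ℕ) = m)).card) := by
  rw [restrictedPartitions]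
  refine Finset.card_bij' (fun f _ => Phi f)
    (fun b hb => Psi b ((mem_filter.mp hb).2.1)) ?_ ?_ ?_ ?_
  · -- Phi f ∈ target
    intro f hf
    obtain ⟨-, hmono, hsum⟩ := mem_filter.mp hf
    have hstep := padF_step f hmono
    have hb : ∀ j : Fin (n+1), ((Phi f j : ℕ)) = padF f ↑j - padF f (↑j+1) := fun j => rfl
    have htop : padF f (n+1) = 0 := padF_top f (n+1) (by omega)
    have htail := tail_eq (Phi f) (padF f) hb hstep htop
    have hA : ∑ j, (Phi f j : ℕ) = k := by
      rw [← tailSum_zero, htail 0 (by omega)]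
      rfl
    refine mem_filter.mpr ⟨mem_univ _, hA, ?_⟩
    -- weighted sum = m, via ℤ
    have key : ((∑ j : Fin (n+1), (j:ℕ) * (Phi f j : ℕ) : ℕ) : ℤ) = (m : ℤ) := by
      push_cast
      have hterm : ∀ j : Fin (n+1), ((j:ℕ):ℤ) * ((Phi f j : ℕ):ℤ)
          = ((j:ℕ):ℤ) * ((padF f ↑j : ℤ) - (padF f (↑j+1) : ℤ)) := by
        intro j
        rw [hb j, Nat.cast_sub (hstep ↑j)]
      rw [Finset.sum_congr rfl (fun j _ => hterm j)]
      rw [Fin.sum_univ_eq_sum_range (fun t => (t:ℤ) * ((padF f t : ℤ) - (padF f (t+1) : ℤ))) (n+1)]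
      rw [tele_int (fun t => (padF f t : ℤ)) (n+1)]
      simp only [htop]
      rw [sum_range_succ]
      simp only [htop, Nat.cast_zero, mul_zero, sub_zero, add_zero]
      rw [show ∑ j ∈ range n, ((padF f (j+1) : ℤ)) = ∑ i : Fin n, ((padF f (↑i+1) : ℤ)) from
        (Fin.sum_univ_eq_sum_range (fun t => (padF f (t+1) : ℤ)) n).symm]
      have : ∀ i : Fin n, ((padF f (↑i+1) : ℤ)) = ((f i : ℕ) : ℤ) := by
        intro i
        rw [padF_succ f ↑i i.is_lt]
      rw [Finset.sum_congr rfl (fun i _ => this i), ← Nat.cast_sum, hsum]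
    exact_mod_cast key
  · -- Psi b ∈ source
    intro b hb
    obtain ⟨-, hk, hm⟩ := mem_filter.mp hb
    refine mem_filter.mpr ⟨mem_univ _, ?_, ?_⟩
    · intro i j hij
      exact step_anti _ (fun t => tailSum_step b t) ((i:ℕ)+1) ((j:ℕ)+1) (by
        have : (i:ℕ) ≤ (j:ℕ) := hij
        omega)
    · show ∑ i : Fin n, tailSum b ((i:ℕ)+1) = m
      rw [sum_tailSum, hm]
  · -- left inverse
    intro f hf
    obtain ⟨-, hmono, hsum⟩ := mem_filter.mp hf
    have hstep := padF_step f hmono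
    have htail := tail_eq (Phi f) (padF f) (fun j => rfl) hstep
      (padF_top f (n+1) (by omega))
    funext i
    apply Fin.ext
    show tailSum (Phi f) ((i:ℕ)+1) = (f i : ℕ)
    rw [htail ((i:ℕ)+1) (by have := i.is_lt; omega), padF_succ f ↑i i.is_lt]
  · -- right inverse
    intro b hb
    obtain ⟨-, hk, hm⟩ := mem_filter.mp hb
    funext j
    apply Fin.ext
    show padF (Psi b hk) ↑j - padF (Psi b hk) (↑j+1) = (b j : ℕ)
    have hPF : ∀ t, t ≤ n+1 → padF (Psi b hk) t = tailSum b t := by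
      intro t ht
      match t with
      | 0 =>
        rw [tailSum_zero, hk]; rfl
      | (s+1) =>
        by_cases hs : s < n
        · rw [padF_succ _ s hs]
          rfl
        · have hsn : s = n := by omega
          rw [padF_top _ (s+1) (by omega), hsn, tailSum_top b (n+1) (le_refl _)]
    have h1 := hPF ↑j (by have := j.is_lt; omega)
    have h2 := hPF (↑j+1) (by have := j.is_lt; omega)
    rw [h1, h2, tailSum_succ b ↑j j.is_lt]
    simp



def wtF {k n : ℕ} (b : Fin (n+1) → Fin (k+1)) : ℕ := ∑ j : Fin (n+1), (j:ℕ) * (b j : ℕ)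

def NEq (k n r v : ℕ) : ℕ := ((comps k (n+1)).filter (fun b => wtF b % r = v)).card

lemma rot_mem {k n : ℕ} (b : Fin (n+1) → Fin (k+1)) (hb : b ∈ comps k (n+1)) :
    (fun j => b (j - 1)) ∈ comps k (n+1) := by
  rw [comps, mem_filter] at hb ⊢
  exact ⟨mem_univ _,
    (Fintype.sum_equiv (Equiv.subRight (1 : Fin (n+1))) _ _ (fun x => rfl)).trans hb.2⟩

lemma wt_rot {k n : ℕ} (r : ℕ) (hr : r ∣ n+1) (b : Fin (n+1) → Fin (k+1))
    (hb : ∑ j, (b j : ℕ) = k) :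
    wtF (fun j => b (j - 1)) % r = (wtF b + k) % r := by
  have h1 : wtF (fun j => b (j - 1)) = ∑ j : Fin (n+1), ((j+1 : Fin (n+1)) : ℕ) * (b j : ℕ) := by
    refine Fintype.sum_equiv (Equiv.subRight (1 : Fin (n+1))) _ _ (fun x => ?_)
    show (x:ℕ) * (b (x - 1) : ℕ) = ((x - 1 + 1 : Fin (n+1)) : ℕ) * (b (x - 1) : ℕ)
    rw [sub_add_cancel]
  have h2 : ∀ j : Fin (n+1), ((j+1 : Fin (n+1)) : ℕ) % r = ((j:ℕ) + 1) % r := by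
    intro j
    have hv : ((j+1 : Fin (n+1)) : ℕ) = ((j:ℕ) + (1 : Fin (n+1)).val) % (n+1) := rfl
    have m1 : (1 : Fin (n+1)).val ≡ 1 [MOD r] :=
      ((Nat.mod_modEq 1 (n+1)).of_dvd hr)
    calc ((j+1 : Fin (n+1)) : ℕ) % r
        = (((j:ℕ) + (1 : Fin (n+1)).val) % (n+1)) % r := by rw [hv]
      _ = ((j:ℕ) + 1) % r := by
          have := ((Nat.mod_modEq ((j:ℕ) + (1 : Fin (n+1)).val) (n+1)).of_dvd hr).trans
            ((Nat.ModEq.refl (j:ℕ)).add m1)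
          exact this
  rw [h1]
  have h3 : (∑ j : Fin (n+1), ((j+1 : Fin (n+1)) : ℕ) * (b j : ℕ)) % r
      = (∑ j : Fin (n+1), ((j:ℕ) + 1) * (b j : ℕ)) % r := by
    rw [Finset.sum_nat_mod]
    rw [show (∑ j : Fin (n+1), ((j:ℕ) + 1) * (b j : ℕ)) % r
        = (∑ j : Fin (n+1), (((j:ℕ) + 1) * (b j : ℕ)) % r) % r from Finset.sum_nat_mod _ _ _]
    congr 1
    refine sum_congr rfl (fun j _ => ?_)
    exact Nat.ModEq.mul_right _ (h2 j)
  rw [h3]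
  congr 1
  calc ∑ j : Fin (n+1), ((j:ℕ) + 1) * (b j : ℕ)
      = (∑ j : Fin (n+1), (j:ℕ) * (b j : ℕ)) + ∑ j, (b j : ℕ) := by
        rw [← Finset.sum_add_distrib]
        exact sum_congr rfl (fun j _ => by ring)
    _ = wtF b + k := by rw [hb, wtF]

lemma N_shift {k n r : ℕ} (hr : r ∣ n+1) (v : ℕ) (hv : v < r) :
    NEq k n r v = NEq k n r ((v + k) % r) := by
  rw [NEq, NEq]
  refine Finset.card_bij' (fun b _ => fun j => b (j - 1)) (fun b _ => fun j => b (j + 1))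
    ?_ ?_ ?_ ?_
  · intro b hb
    obtain ⟨hb1, hb2⟩ := mem_filter.mp hb
    refine mem_filter.mpr ⟨rot_mem b hb1, ?_⟩
    have hk : ∑ j, (b j : ℕ) = k := (mem_filter.mp hb1).2
    rw [wt_rot r hr b hk, ← Nat.mod_add_mod, hb2]
  · intro b hb
    obtain ⟨hb1, hb2⟩ := mem_filter.mp hb
    have hmem : (fun j => b (j + 1)) ∈ comps k (n+1) := by
      rw [comps, mem_filter] at hb1 ⊢
      exact ⟨mem_univ _,
        (Fintype.sum_equiv (Equiv.addRight (1 : Fin (n+1))) _ _ (fun x => rfl)).trans hb1.2⟩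
    refine mem_filter.mpr ⟨hmem, ?_⟩
    have hk : ∑ j, ((fun j => b (j + 1)) j : ℕ) = k := (mem_filter.mp hmem).2
    have := wt_rot r hr (fun j => b (j + 1)) hk
    have heq : (fun j => (fun j' => b (j' + 1)) (j - 1)) = b := by
      funext j; simp
    rw [heq] at this
    have hcong : wtF (fun j => b (j + 1)) + k ≡ v + k [MOD r] :=
      (Nat.ModEq.symm this).trans hb2
    have hv2 : wtF (fun j => b (j + 1)) ≡ v [MOD r] := hcong.add_right_cancel' k
    show wtF (fun j => b (j + 1)) % r = v
    have := hv2
    unfold Nat.ModEq at this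
    rw [this, Nat.mod_eq_of_lt hv]
  · intro b hb
    funext j
    simp
  · intro b hb
    funext j
    simp

lemma exists_shift (k r : ℕ) (hr : 0 < r) (hco : Nat.Coprime k r) (i j : ℕ) (hj : j < r) :
    ∃ t : ℕ, (i + t * k) % r = j := by
  haveI : NeZero r := ⟨hr.ne'⟩
  obtain ⟨u, hu⟩ := (ZMod.isUnit_iff_coprime k r).mpr hco
  refine ⟨(((j : ZMod r) - (i : ZMod r)) * ↑u⁻¹).val, ?_⟩
  have hcast : ((i + (((j : ZMod r) - (i : ZMod r)) * ↑u⁻¹).val * k : ℕ) : ZMod r)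
      = (j : ZMod r) := by
    push_cast
    rw [ZMod.natCast_val, ZMod.cast_id]
    rw [← hu]
    calc (i : ZMod r) + ((j : ZMod r) - (i : ZMod r)) * ↑u⁻¹ * ↑u
        = (i : ZMod r) + ((j : ZMod r) - (i : ZMod r)) * (↑u⁻¹ * ↑u) := by ring
      _ = (j : ZMod r) := by rw [Units.inv_mul]; ring
  have := congrArg ZMod.val hcast
  rwa [ZMod.val_natCast, ZMod.val_natCast_of_lt hj] at this

lemma N_all {k n r : ℕ} (hr : 0 < r) (hrd : r ∣ n+1) (hco : Nat.Coprime k r)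
    (i : ℕ) (hi : i < r) (j : ℕ) (hj : j < r) : NEq k n r j = NEq k n r i := by
  have iter : ∀ t : ℕ, NEq k n r i = NEq k n r ((i + t * k) % r) := by
    intro t
    induction t with
    | zero => simp [Nat.mod_eq_of_lt hi]
    | succ t ih =>
      rw [ih, N_shift hrd ((i + t * k) % r) (Nat.mod_lt _ hr), Nat.mod_add_mod,
        show i + t * k + k = i + (t+1) * k by ring]
  obtain ⟨t, ht⟩ := exists_shift k r hr hco i j hj
  rw [iter t, ht]

lemma wt_le {k n : ℕ} (b : Fin (n+1) → Fin (k+1)) (hb : ∑ j, (b j : ℕ) = k) :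
    wtF b ≤ k * n := by
  calc wtF b ≤ ∑ j : Fin (n+1), n * (b j : ℕ) := by
        refine sum_le_sum (fun j _ => ?_)
        exact Nat.mul_le_mul_right _ (by have := j.is_lt; omega)
    _ = n * k := by rw [← Finset.mul_sum, hb]
    _ = k * n := Nat.mul_comm n k


theorem sum_restrictedPartitions_mod (k l r : ℕ) (hk : 0 < k) (hl : 0 < l)
    (h : Nat.gcd k l = 1) (hr : 0 < r) (hrl : r ∣ l) (i : ℕ) (hi : i < r) :
    r * ∑ m ∈ (Finset.range (k * (l - 1) + 1)).filter (fun m => m % r = i),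
        restrictedPartitions k (l - 1) m
      = (k + l - 1).choose (l - 1) := by
  obtain ⟨n, rfl⟩ : ∃ n, l = n + 1 := ⟨l - 1, by omega⟩
  have hco : Nat.Coprime k r := Nat.Coprime.coprime_dvd_right hrl h
  simp only [Nat.add_sub_cancel]
  have hA : ∀ m, restrictedPartitions k n m
      = ((comps k (n+1)).filter (fun b => wtF b = m)).card := by
    intro m
    rw [restrictedPartitions_eq k n m, comps, filter_filter]
    rfl
  rw [Finset.sum_congr rfl (fun m _ => hA m)]
  have h2 : ∑ m ∈ (range (k*n+1)).filter (fun m => m % r = i),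
      ((comps k (n+1)).filter (fun b => wtF b = m)).card = NEq k n r i := by
    rw [NEq]
    rw [Finset.card_eq_sum_card_fiberwise (f := wtF)
      (t := (range (k*n+1)).filter (fun m => m % r = i)) (fun b hb => by
        obtain ⟨hb1, hb2⟩ := mem_filter.mp hb
        refine mem_filter.mpr ⟨mem_range.mpr ?_, hb2⟩
        have := wt_le b (mem_filter.mp hb1).2
        omega)]
    refine sum_congr rfl (fun m hm => ?_)
    obtain ⟨hm1, hm2⟩ := mem_filter.mp hm
    rw [filter_filter]
    congr 1
    apply filter_congr
    intro b _
    constructor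
    · exact fun hx => ⟨by rw [hx]; exact hm2, hx⟩
    · exact fun hx => hx.2
  rw [h2]
  have hfib : (comps k (n+1)).card = ∑ v ∈ range r, NEq k n r v :=
    card_eq_sum_card_fiberwise (fun b _ => mem_range.mpr (Nat.mod_lt _ hr))
  have hall : ∀ v ∈ range r, NEq k n r v = NEq k n r i :=
    fun v hv => N_all hr hrl hco i hi v (mem_range.mp hv)
  rw [sum_congr rfl hall, sum_const, card_range, smul_eq_mul] at hfib
  rw [← hfib, card_comps]
  have e1 : (n+1) + k - 1 = k + n := by omega
  have e2 : k + (n+1) - 1 = k + n := by omega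
  rw [e1, e2]
  have := Nat.choose_symm (Nat.le_add_right k n)
  rw [Nat.add_sub_cancel_left] at this
  exact this.symm
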